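/- The following claimed identity is false: there exist a 2×2 positive definite matrix V and vectors x(1), x(2), x(3) ∈ ℝ² such that det(V + Σ_{i=1}^3 x(i)x(i)ᵀ) ≠ det(V)·(1 + Σ_{i=1}^3 x(i)ᵀ V⁻¹ x(i)). Concretely, with V = 1.2·I₂, x(1) = (0.3, 0.7), x(2) = (0.6, 0.1), x(3) = (0.1, 0.5), the left side equals 3.1346 while the right side equals 2.892. -/

import Mathlib

open Matrix

lemma myPosDef : ((6/5 : ℝ) • (1 : Matrix (Fin 2) (Fin 2) ℝ)).PosDef := by
  refine Matrix.PosDef.of_dotProduct_mulVec_pos ?_ fun y hy => ?_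
  · unfold Matrix.IsHermitian
    ext i j
    simp [Matrix.conjTranspose_apply, Matrix.one_apply, eq_comm]
  · have : (star y) ⬝ᵥ (((6/5 : ℝ) • (1 : Matrix (Fin 2) (Fin 2) ℝ)).mulVec y)
        = (6/5) * (y 0 ^2 + y 1 ^2) := by
      simp [Matrix.mulVec, dotProduct, Fin.sum_univ_two, Matrix.one_apply]
      ring
    rw [this]
    have h : 0 < y 0 ^2 + y 1 ^2 := by
      rcases (show y 0 ≠ 0 ∨ y 1 ≠ 0 by
        by_contra h; push_neg at h
        exact hy (funext fun i => by fin_cases i <;> simp [h.1, h.2])) with h | h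
      · positivity
      · positivity
    positivity

theorem stmt10 :
    ∃ (V : Matrix (Fin 2) (Fin 2) ℝ) (x : Fin 3 → Fin 2 → ℝ),
      V.PosDef ∧
      (V + ∑ i, vecMulVec (x i) (x i)).det ≠
        V.det * (1 + ∑ i, x i ⬝ᵥ V⁻¹.mulVec (x i)) ∧
      V = (6/5 : ℝ) • (1 : Matrix (Fin 2) (Fin 2) ℝ) ∧
      x 0 = ![0.3, 0.7] ∧ x 1 = ![0.6, 0.1] ∧ x 2 = ![0.1, 0.5] ∧
      (V + ∑ i, vecMulVec (x i) (x i)).det = 3.1346 ∧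
      V.det * (1 + ∑ i, x i ⬝ᵥ V⁻¹.mulVec (x i)) = 2.892 := by
  have hinv : ((6/5 : ℝ) • (1 : Matrix (Fin 2) (Fin 2) ℝ))⁻¹ = (5/6 : ℝ) • 1 := by
    apply inv_eq_right_inv
    rw [smul_mul_smul_comm, one_mul]
    norm_num
  refine ⟨(6/5 : ℝ) • 1, ![![0.3, 0.7], ![0.6, 0.1], ![0.1, 0.5]], myPosDef, ?_, rfl,
    rfl, rfl, rfl, ?_, ?_⟩ <;>
  · simp only [hinv, Fin.sum_univ_three, Matrix.det_fin_two, vecMulVec, dotProduct,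
      Fin.sum_univ_two, Matrix.add_apply, Matrix.smul_apply, Matrix.one_apply,
      Matrix.of_apply, Matrix.mulVec, Matrix.cons_val_zero, Matrix.cons_val_one,
      Matrix.head_cons, Matrix.cons_val_two, Matrix.tail_cons, Matrix.cons_val]
    norm_num
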